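/- arXiv:2603.20861 — 3 statements merged into one kernel-verified Lean document; each statement's English description precedes it below -/
import Mathlib

section
/- Let φ : X → Y be a local homeomorphism between locally compact Hausdorff spaces and let A be a Hausdorff topological abelian group. For every f ∈ C_c(X,A) and every y ∈ Y, the set φ⁻¹(y) ∩ supp(f) is finite, so the pushforward (φ_* f)(y) = Σ_{x ∈ φ⁻¹(y)} f(x) is a well-defined finite sum, and φ_* f is a continuous compactly supported function on Y. Thus φ_* : C_c(X,A) → C_c(Y,A) is a group homomorphism. -/
/-- For a local homeomorphism `φ : X → Y` between locally compact Hausdorff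
spaces and a Hausdorff topological abelian group `A`, for every `f ∈ C_c(X,A)` each set
`φ⁻¹(y) ∩ supp f` is finite, so the pushforward `(φ_* f)(y) = ∑_{x ∈ φ⁻¹(y)} f x` is a
well-defined finite sum; moreover `φ_* f` is continuous with compact support, and `φ_*` is
additive (a group homomorphism `C_c(X,A) → C_c(Y,A)`). -/
theorem stmt_4 (X Y : Type) [TopologicalSpace X] [TopologicalSpace Y]
    [LocallyCompactSpace X] [T2Space X] [LocallyCompactSpace Y] [T2Space Y]
    (A : Type) [AddCommGroup A] [TopologicalSpace A] [IsTopologicalAddGroup A] [T2Space A]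
    (φ : X → Y) (hφ : IsLocalHomeomorph φ)
    (f : X → A) (hf : Continuous f) (hsupp : HasCompactSupport f) :
    (∀ y : Y, (φ ⁻¹' {y} ∩ tsupport f).Finite) ∧
    Continuous (fun y : Y => ∑ᶠ x ∈ φ ⁻¹' {y}, f x) ∧
    HasCompactSupport (fun y : Y => ∑ᶠ x ∈ φ ⁻¹' {y}, f x) ∧
    (∀ g : X → A, Continuous g → HasCompactSupport g → ∀ y : Y,
      (∑ᶠ x ∈ φ ⁻¹' {y}, (f x + g x)) =
        (∑ᶠ x ∈ φ ⁻¹' {y}, f x) + ∑ᶠ x ∈ φ ⁻¹' {y}, g x) := by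
  classical
  -- a choice of partial homeomorphs
  choose e he hee using fun x : X => hφ x
  -- finiteness of fibers intersected with compact supports (for an arbitrary function)
  have key : ∀ (h : X → A), HasCompactSupport h → ∀ y : Y,
      (φ ⁻¹' {y} ∩ tsupport h).Finite := by
    intro h hh y
    have hcpt : IsCompact (φ ⁻¹' {y} ∩ tsupport h) :=
      hh.inter_left (isClosed_singleton.preimage hφ.continuous)
    obtain ⟨t, htF, hcov⟩ := hcpt.elim_nhds_subcover (fun x => (e x).source)
      (fun x _ => (e x).open_source.mem_nhds (he x))
    refine Set.Finite.subset t.finite_toSet fun z hz => ?_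
    obtain ⟨x, hxt, hzx⟩ := Set.mem_iUnion₂.mp (hcov hz)
    have hxF : x ∈ φ ⁻¹' {y} ∩ tsupport h := htF x hxt
    have hzy : φ z = y := hz.1
    have hxy : φ x = y := hxF.1
    have : z = x := by
      apply (e x).injOn hzx (he x)
      rw [← hee x, hzy, hxy]
    simpa [this] using hxt
  have keyf := key f hsupp
  refine ⟨keyf, ?_, ?_, ?_⟩
  · -- continuity
    rw [continuous_iff_continuousAt]
    intro y₀
    have hS : (φ ⁻¹' {y₀} ∩ tsupport f).Finite := keyf y₀
    set S : Finset X := hS.toFinset with hSdef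
    obtain ⟨O, hO, hOdisj⟩ := hS.t2_separation
    -- disjoint open neighborhoods inside sources
    set U : X → Set X := fun x => O x ∩ (e x).source with hUdef
    have hUopen : ∀ x, IsOpen (U x) := fun x => ((hO x).2.inter (e x).open_source)
    have hxU : ∀ x, x ∈ U x := fun x => ⟨(hO x).1, he x⟩
    have hUsub : ∀ x, U x ⊆ (e x).source := fun x => Set.inter_subset_right
    set V : X → Set Y := fun x => φ '' U x with hVdef
    have hVopen : ∀ x, IsOpen (V x) := fun x => hφ.isOpenMap _ (hUopen x)
    have hVtarget : ∀ x, V x ⊆ (e x).target := by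
      intro x y hy
      obtain ⟨u, hu, rfl⟩ := hy
      rw [hee x]
      exact (e x).map_source (hUsub x hu)
    -- the key local-inverse facts
    have symm_mem : ∀ x, ∀ y ∈ V x, (e x).symm y ∈ U x ∧ φ ((e x).symm y) = y := by
      intro x y hy
      obtain ⟨u, hu, rfl⟩ := hy
      have husrc : u ∈ (e x).source := hUsub x hu
      have hphiu : φ u = (e x) u := by rw [hee x]
      have hsy : (e x).symm (φ u) = u := by rw [hphiu]; exact (e x).left_inv husrc
      rw [hsy]
      exact ⟨hu, rfl⟩
    -- the "bad" compact set and the neighborhood W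
    set C : Set X := tsupport f \ ⋃ x ∈ S, U x with hCdef
    have hCcpt : IsCompact C := hsupp.diff (isOpen_biUnion fun x _ => hUopen x)
    have hCclosed : IsClosed (φ '' C) := (hCcpt.image hφ.continuous).isClosed
    set W : Set Y := (⋂ x ∈ S, V x) ∩ (φ '' C)ᶜ with hWdef
    have hWopen : IsOpen W :=
      ((isOpen_biInter_finset fun x _ => hVopen x).inter hCclosed.isOpen_compl)
    have hy₀W : y₀ ∈ W := by
      constructor
      · refine Set.mem_iInter₂.mpr fun x hx => ?_
        have hxS : x ∈ φ ⁻¹' {y₀} ∩ tsupport f := hS.mem_toFinset.mp hx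
        exact ⟨x, hxU x, hxS.1⟩
      · rintro ⟨z, hzC, hzy⟩
        have hzS : z ∈ S := hS.mem_toFinset.mpr ⟨hzy, hzC.1⟩
        exact hzC.2 (Set.mem_biUnion hzS (hxU z))
    have hWV : ∀ x ∈ S, W ⊆ V x := fun x hx y hy =>
      Set.mem_iInter₂.mp hy.1 x hx
    -- on W, the pushforward equals a finite sum of continuous functions
    have claim : ∀ y ∈ W, (∑ᶠ x ∈ φ ⁻¹' {y}, f x) =
        ∑ x ∈ S, f ((e x).symm y) := by
      intro y hy
      rw [finsum_mem_eq_sum_of_subset f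
        (t := S.image fun x => (e x).symm y) ?h₁ ?h₂]
      · refine Finset.sum_image fun x₁ hx₁ x₂ hx₂ hx12 => ?_
        by_contra hne
        have h1 := (symm_mem x₁ y (hWV x₁ hx₁ hy)).1
        have h2 := (symm_mem x₂ y (hWV x₂ hx₂ hy)).1
        rw [hx12] at h1
        have hdisj := hOdisj (hS.mem_toFinset.mp hx₁) (hS.mem_toFinset.mp hx₂) hne
        exact (Set.disjoint_left.mp hdisj h1.1) h2.1
      case h₁ =>
        rintro z ⟨hzy, hzsupp⟩
        have hzy' : φ z = y := hzy
        have hztsupp : z ∈ tsupport f := subset_tsupport f hzsupp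
        have hznC : z ∉ C := by
          intro hzC
          exact hy.2 ⟨z, hzC, hzy'⟩
        have hzU : z ∈ ⋃ x ∈ S, U x := by
          by_contra h
          exact hznC ⟨hztsupp, h⟩
        obtain ⟨x, hxS, hzUx⟩ := Set.mem_iUnion₂.mp hzU
        have husrc : z ∈ (e x).source := hUsub x hzUx
        have hsy : (e x).symm y = z := by
          rw [← hzy']
          have : φ z = (e x) z := by rw [hee x]
          rw [this]
          exact (e x).left_inv husrc
        exact Finset.mem_coe.mpr (Finset.mem_image.mpr ⟨x, hxS, hsy⟩)
      case h₂ =>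
        intro z hz
        obtain ⟨x, hxS, rfl⟩ := Finset.mem_image.mp (Finset.mem_coe.mp hz)
        exact (symm_mem x y (hWV x hxS hy)).2
    -- the finite sum is continuous on W
    have hG : ContinuousOn (fun y => ∑ x ∈ S, f ((e x).symm y)) W := by
      refine continuousOn_finset_sum S fun x hx => ?_
      have hsub : W ⊆ (e x).target := fun y hy => hVtarget x (hWV x hx hy)
      exact hf.comp_continuousOn ((e x).continuousOn_symm.mono hsub)
    have hGat : ContinuousAt (fun y => ∑ x ∈ S, f ((e x).symm y)) y₀ :=
      hG.continuousAt (hWopen.mem_nhds hy₀W)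
    refine hGat.congr ?_
    exact Filter.eventuallyEq_of_mem (hWopen.mem_nhds hy₀W) fun y hy => (claim y hy).symm
  · -- compact support
    apply HasCompactSupport.intro (hsupp.image hφ.continuous)
    intro y hy
    by_contra h
    obtain ⟨x, hx, hfx⟩ := exists_ne_zero_of_finsum_mem_ne_zero h
    exact hy ⟨x, subset_tsupport f hfx, hx⟩
  · -- additivity
    intro g hg hgsupp y
    refine finsum_mem_add_distrib' ?_ ?_
    · exact (keyf y).subset
        (Set.inter_subset_inter_right _ (subset_tsupport f))
    · exact (key g hgsupp y).subset
        (Set.inter_subset_inter_right _ (subset_tsupport g))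
end

section
/- Let φ : X → Y and ψ : Y → Z be local homeomorphisms between locally compact Hausdorff spaces and A a Hausdorff topological abelian group. Then the compactly supported pushforwards satisfy (ψ ∘ φ)_* = ψ_* ∘ φ_* as homomorphisms C_c(X,A) → C_c(Z,A). -/
open Set

/-- The intersection of a fiber of a locally injective continuous map with a compact set is
finite. -/
lemma fiber_inter_compact_finite {X Y : Type} [TopologicalSpace X] [TopologicalSpace Y]
    [T1Space Y] {χ : X → Y} (hloc : IsLocallyInjective χ) (hc : Continuous χ)
    {K : Set X} (hK : IsCompact K) (z : Y) : ((χ ⁻¹' {z}) ∩ K).Finite := by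
  set s : Set X := (χ ⁻¹' {z}) ∩ K with hs
  have hscomp : IsCompact s :=
    hK.inter_left ((isClosed_singleton (x := z)).preimage hc)
  -- choose injectivity neighborhoods
  choose U hUopen hUmem hUinj using hloc
  have hnhds : ∀ x ∈ s, U x ∈ nhds x := fun x _ => (hUopen x).mem_nhds (hUmem x)
  obtain ⟨t, hts, hcover⟩ := hscomp.elim_nhds_subcover U hnhds
  apply Set.Finite.subset t.finite_toSet
  intro x hx
  obtain ⟨y, hyt, hxy⟩ := Set.mem_iUnion₂.mp (hcover hx)
  have hys : y ∈ s := hts y hyt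
  have hxy' : x = y := hUinj y hxy (hUmem y) (hx.1.trans hys.1.symm)
  exact hxy' ▸ hyt

/-- For local homeomorphisms `φ : X → Y`, `ψ : Y → Z` between locally compact
Hausdorff spaces and a Hausdorff topological abelian group `A`, the compactly supported
pushforwards satisfy `(ψ ∘ φ)_* = ψ_* ∘ φ_*` on `C_c(X,A)`: pointwise, for every compactly
supported continuous `f` and every `z`,
`∑_{x ∈ (ψ∘φ)⁻¹(z)} f x = ∑_{y ∈ ψ⁻¹(z)} ∑_{x ∈ φ⁻¹(y)} f x`. -/
theorem stmt_5 (X Y Z : Type) [TopologicalSpace X] [TopologicalSpace Y] [TopologicalSpace Z]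
    [LocallyCompactSpace X] [T2Space X] [LocallyCompactSpace Y] [T2Space Y]
    [LocallyCompactSpace Z] [T2Space Z]
    (A : Type) [AddCommGroup A] [TopologicalSpace A] [IsTopologicalAddGroup A] [T2Space A]
    (φ : X → Y) (hφ : IsLocalHomeomorph φ) (ψ : Y → Z) (hψ : IsLocalHomeomorph ψ)
    (f : X → A) (hf : Continuous f) (hsupp : HasCompactSupport f) :
    ∀ z : Z, (∑ᶠ x ∈ (ψ ∘ φ) ⁻¹' {z}, f x) =
      ∑ᶠ y ∈ ψ ⁻¹' {z}, ∑ᶠ x ∈ φ ⁻¹' {y}, f x := by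
  intro z
  have hψφ : IsLocalHomeomorph (ψ ∘ φ) := hψ.comp hφ
  set K : Set X := tsupport f with hK
  have hKc : IsCompact K := hsupp
  set S : Set X := ((ψ ∘ φ) ⁻¹' {z}) ∩ K with hS
  have hSfin : S.Finite :=
    fiber_inter_compact_finite hψφ.isLocallyInjective hψφ.continuous hKc z
  set T : Set Y := φ '' S with hT
  have hTfin : T.Finite := hSfin.image φ
  have hTsub : T ⊆ ψ ⁻¹' {z} := by
    rintro y ⟨x, ⟨hx1, _⟩, rfl⟩
    exact hx1
  -- LHS reduces to a sum over S
  have hL : (∑ᶠ x ∈ (ψ ∘ φ) ⁻¹' {z}, f x) = ∑ᶠ x ∈ S, f x := by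
    apply finsum_mem_inter_support_eq'
    intro x hx
    constructor
    · intro hx1; exact ⟨hx1, subset_tsupport f hx⟩
    · exact fun h => h.1
  -- RHS reduces to a sum over T
  have hR : (∑ᶠ y ∈ ψ ⁻¹' {z}, ∑ᶠ x ∈ φ ⁻¹' {y}, f x)
      = ∑ᶠ y ∈ T, ∑ᶠ x ∈ φ ⁻¹' {y}, f x := by
    apply finsum_mem_inter_support_eq'
    intro y hy
    constructor
    · intro hy1
      -- the inner sum is nonzero, so some x in the fiber has f x ≠ 0
      by_contra hyT
      apply hy
      apply finsum_mem_of_eqOn_zero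
      intro x hx
      by_contra hfx
      exact hyT ⟨x, ⟨show ψ (φ x) = z by rw [hx]; exact hy1,
        subset_tsupport f hfx⟩, hx⟩
    · exact fun h => hTsub h
  -- inner sums over T reduce to sums over fibers intersected with S
  have hinner : ∀ y ∈ T, (∑ᶠ x ∈ φ ⁻¹' {y}, f x) = ∑ᶠ x ∈ (φ ⁻¹' {y}) ∩ S, f x := by
    intro y hy
    apply finsum_mem_inter_support_eq'
    intro x hx
    constructor
    · intro hx1
      refine ⟨hx1, ⟨?_, subset_tsupport f hx⟩⟩
      show ψ (φ x) = z
      rw [hx1]; exact hTsub hy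
    · exact fun h => h.1
  rw [hL, hR, finsum_mem_congr rfl hinner]
  -- now use the disjoint union decomposition of S
  have hdisj : T.PairwiseDisjoint fun y => (φ ⁻¹' {y}) ∩ S := by
    intro y1 _ y2 _ hne
    refine Set.disjoint_left.mpr ?_
    rintro x ⟨hx1, _⟩ ⟨hx2, _⟩
    exact hne (hx1 ▸ hx2 ▸ rfl)
  have hfib : ∀ y ∈ T, ((φ ⁻¹' {y}) ∩ S).Finite := fun y _ => hSfin.inter_of_right _
  rw [← finsum_mem_biUnion hdisj hTfin hfib]
  have hset : (⋃ y ∈ T, (φ ⁻¹' {y}) ∩ S) = S := by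
    ext x
    constructor
    · intro hx
      obtain ⟨y, _, _, hxS⟩ := Set.mem_iUnion₂.mp hx
      exact hxS
    · intro hx
      exact Set.mem_iUnion₂.mpr ⟨φ x, ⟨x, hx, rfl⟩, rfl, hx⟩
  rw [hset]
end

section
/- Let X be a locally compact Hausdorff totally disconnected space with a basis of compact open sets. Then C_c(X,ℤ), the group of compactly supported continuous integer-valued functions on X, is a free abelian group; indeed it is generated by the characteristic functions of compact open subsets of X. -/
open scoped CompactlySupported


open Submodule in
theorem kerFree {R M ι : Type*} [CommRing R] [AddCommGroup M] [Module R M]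
    (b : Module.Basis ι R M) (φ : M →ₗ[R] R) (i₀ : ι) (h1 : φ (b i₀) = 1) :
    Module.Free R (LinearMap.ker φ) := by
  classical
  set w : ι → M := fun i => b i - φ (b i) • b i₀ with hw
  set v : {i : ι // i ≠ i₀} → M := fun i => w i with hv
  have hker : ∀ i, w i ∈ LinearMap.ker φ := by
    intro i; simp [hw, LinearMap.mem_ker, h1]
  have hcoord : ∀ (i : ι) (j : {i : ι // i ≠ i₀}), b.coord j (w i) =
      if i = (j : ι) then 1 else 0 := by
    intro i j
    simp only [hw, map_sub, map_smul, Module.Basis.coord_apply, Module.Basis.repr_self]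
    rw [Finsupp.single_eq_of_ne j.2]
    by_cases h : i = (j : ι)
    · simp [h, Finsupp.single_eq_same]
    · simp [Finsupp.single_eq_of_ne h, h]
  have hli : LinearIndependent R v := by
    rw [linearIndependent_iff']
    intro s g hs j hj
    have := congrArg (b.coord j) hs
    rw [map_sum, map_zero] at this
    rw [← this, Finset.sum_eq_single j]
    · simp [hv, map_smul, hcoord]
    · intro i hi hij
      rw [map_smul, hv, hcoord]
      simp [Subtype.coe_injective.ne hij]
    · intro h; exact absurd hj h
  have hw0 : w i₀ = 0 := by simp [hw, h1]
  have hsp : span R (Set.range v) = LinearMap.ker φ := by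
    apply le_antisymm
    · rw [span_le]; rintro x ⟨i, rfl⟩; exact hker i
    · intro x hx
      have hrep : ∑ i ∈ (b.repr x).support, (b.repr x) i • b i = x := by
        have := b.linearCombination_repr x
        rwa [Finsupp.linearCombination_apply, Finsupp.sum] at this
      have hphi : ∑ i ∈ (b.repr x).support, (b.repr x) i * φ (b i) = φ x := by
        conv_rhs => rw [← hrep]
        rw [map_sum]; simp [smul_eq_mul]
      have hx0 : φ x = 0 := hx
      have hxw : x = ∑ i ∈ (b.repr x).support, (b.repr x) i • w i := by
        simp only [hw, smul_sub, Finset.sum_sub_distrib, hrep, smul_smul, ← Finset.sum_smul,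
          hphi, hx0, zero_smul, sub_zero]
      rw [hxw]
      refine sum_mem fun i _ => ?_
      by_cases h : i = i₀
      · simp [h, hw0]
      · exact smul_mem _ _ (subset_span ⟨⟨i, h⟩, rfl⟩)
  let c : {i : ι // i ≠ i₀} → LinearMap.ker φ := fun i => ⟨v i, hker i⟩
  have hlic : LinearIndependent R c :=
    LinearIndependent.of_comp (LinearMap.ker φ).subtype hli
  have hspc : span R (Set.range c) = ⊤ := by
    apply Submodule.map_injective_of_injective (LinearMap.ker φ).injective_subtype
    rw [Submodule.map_span, Submodule.map_top, Submodule.range_subtype]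
    have himg : (LinearMap.ker φ).subtype '' Set.range c = Set.range v := by
      ext m
      constructor
      · rintro ⟨y, ⟨i, rfl⟩, rfl⟩; exact ⟨i, rfl⟩
      · rintro ⟨i, rfl⟩; exact ⟨c i, ⟨i, rfl⟩, rfl⟩
    rw [himg, hsp]
  exact Module.Free.of_basis (Module.Basis.mk hlic (le_of_eq hspc.symm))

open Profinite NobelingProof in
theorem kerEvalFree (Y : Type) [TopologicalSpace Y] [CompactSpace Y] [T2Space Y]
    [TotallyDisconnectedSpace Y] (y : Y) :
    Module.Free ℤ (LinearMap.ker (LocallyConstant.evalₗ ℤ y : LocallyConstant Y ℤ →ₗ[ℤ] ℤ)) := by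
  classical
  let S : Profinite := Profinite.of Y
  obtain ⟨_, _⟩ := exists_wellOrder {C : Set S // IsClopen C}
  let ι : S → ({C : Set S // IsClopen C} → Bool) := Nobeling.ι S
  have hι : Topology.IsClosedEmbedding ι := Nobeling.isClosedEmbedding S
  let C : Set ({C : Set S // IsClopen C} → Bool) := Set.range ι
  have hC : IsClosed C := hι.isClosed_range
  have hne : Nonempty C := ⟨⟨ι y, ⟨y, rfl⟩⟩⟩
  have hgood : Products.isGood C Products.nil := by
    intro h
    rw [Products.lt_nil_empty] at h
    simp only [Products.eval, Products.nil, List.map_nil, List.prod_nil, Set.image_empty,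
      Submodule.span_empty, Submodule.mem_bot] at h
    exact one_ne_zero h
  let B0 : Module.Basis (GoodProducts C) ℤ (LocallyConstant C ℤ) := GoodProducts.Basis C hC
  let E : LocallyConstant C ℤ ≃ₗ[ℤ] LocallyConstant Y ℤ :=
    (LocallyConstant.congrLeftₗ ℤ hι.isEmbedding.toHomeomorph).symm
  let B : Module.Basis (GoodProducts C) ℤ (LocallyConstant Y ℤ) := B0.map E
  let i₀ : GoodProducts C := ⟨Products.nil, hgood⟩
  have hB : B i₀ = 1 := by
    have h0 : B0 i₀ = 1 := by
      rw [show B0 i₀ = GoodProducts.eval C i₀ from Module.Basis.mk_apply _ _ _]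
      simp [i₀, GoodProducts.eval, Products.eval, Products.nil]
    have : B i₀ = E (B0 i₀) := rfl
    rw [this, h0]
    rfl
  exact kerFree B (LocallyConstant.evalₗ ℤ y) i₀ (by rw [hB]; rfl)

open scoped CompactlySupported
open OnePoint Topology Filter Set Function
set_option linter.unusedSectionVars false

variable (X : Type) [TopologicalSpace X] [LocallyCompactSpace X] [T2Space X]
    [TotallyDisconnectedSpace X]

theorem exists_compact_clopen {x : X} {U : Set X} (hU : IsOpen U) (hx : x ∈ U) :
    ∃ V : Set X, IsCompact V ∧ IsClopen V ∧ x ∈ V ∧ V ⊆ U := by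
  obtain ⟨K, hK, hxK, hKU⟩ := exists_compact_subset hU hx
  obtain ⟨V, hV, hxV, hVK⟩ :=
    loc_compact_Haus_tot_disc_of_zero_dim.exists_subset_of_mem_open hxK isOpen_interior
  exact ⟨V, hK.of_isClosed_subset hV.1 (hVK.trans interior_subset), hV, hxV,
    (hVK.trans interior_subset).trans hKU⟩

theorem totSep : TotallySeparatedSpace (OnePoint X) := by
  constructor
  have key : ∀ (x : X) (b : OnePoint X), (x : OnePoint X) ≠ b →
      ∃ u : Set (OnePoint X), IsClopen u ∧ (x : OnePoint X) ∈ u ∧ b ∉ u := by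
    intro x b hxb
    have : ∃ U : Set X, IsOpen U ∧ x ∈ U ∧ b ∉ (OnePoint.some '' U) := by
      cases b with
      | infty => exact ⟨univ, isOpen_univ, mem_univ x, infty_notMem_image_coe⟩
      | coe b' =>
        refine ⟨{b'}ᶜ, isOpen_compl_singleton, fun h => hxb (by simpa using h), ?_⟩
        rintro ⟨z, hz, hzb⟩
        exact hz (coe_injective hzb)
    obtain ⟨U, hUo, hxU, hbU⟩ := this
    obtain ⟨V, hVc, hVcl, hxV, hVU⟩ := exists_compact_clopen X hUo hxU
    refine ⟨OnePoint.some '' V, ⟨(hVc.image continuous_coe).isClosed, isOpenEmbedding_coe.isOpenMap _ hVcl.2⟩,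
      mem_image_of_mem _ hxV, fun h => hbU (image_mono hVU h)⟩
  intro a _ b _ hab
  cases a with
  | coe a' =>
    obtain ⟨u, hu, hau, hbu⟩ := key a' b hab
    exact ⟨u, uᶜ, hu.2, hu.1.isOpen_compl, hau, hbu, (union_compl_self u).symm.subset,
      disjoint_compl_right⟩
  | infty =>
    cases b with
    | infty => exact absurd rfl hab
    | coe b' =>
      obtain ⟨u, hu, hbu, hau⟩ := key b' ∞ (Ne.symm hab)
      exact ⟨uᶜ, u, hu.1.isOpen_compl, hu.2, hau, hbu, (compl_union_self u).symm.subset,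
        disjoint_compl_left⟩

noncomputable def toLC (f : C_c(X, ℤ)) : LocallyConstant (OnePoint X) ℤ := by
  refine ⟨fun z => z.elim 0 f, (IsLocallyConstant.iff_continuous _).mpr ?_⟩
  rw [OnePoint.continuous_iff]
  constructor
  · show Tendsto (⇑f) (coclosedCompact X) (𝓝 0)
    rw [nhds_discrete, tendsto_pure]
    rw [Filter.eventually_iff, Filter.mem_coclosedCompact_iff]
    apply f.hasCompactSupport.of_isClosed_subset isClosed_closure
    apply closure_minimal _ isClosed_closure
    intro x hx
    simp only [mem_compl_iff, mem_setOf_eq, not_not] at hx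
    exact subset_closure hx
  · exact f.continuous

theorem toLC_coe (f : C_c(X, ℤ)) (x : X) : toLC X f (x : OnePoint X) = f x := rfl
theorem toLC_infty (f : C_c(X, ℤ)) : toLC X f ∞ = 0 := rfl

noncomputable def fromLC (g : LocallyConstant (OnePoint X) ℤ) (hg : g ∞ = 0) : C_c(X, ℤ) := by
  refine ⟨⟨fun x => g (x : OnePoint X), g.continuous.comp continuous_coe⟩, ?_⟩
  have hKsub : support (⇑g) ⊆ range (OnePoint.some : X → OnePoint X) := by
    intro z hz
    cases z with
    | infty => exact absurd hg hz
    | coe z' => exact ⟨z', rfl⟩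
  have hKcl : IsClosed (support ⇑g) := by
    have : support ⇑g = (⇑g ⁻¹' {0})ᶜ := by ext z; simp [support]
    rw [this]
    exact (g.isLocallyConstant.isOpen_fiber 0).isClosed_compl
  have hKcpt : IsCompact (support ⇑g) := hKcl.isCompact
  have hpre : IsCompact ((OnePoint.some : X → OnePoint X) ⁻¹' (support ⇑g)) := by
    rw [isOpenEmbedding_coe.isEmbedding.isCompact_iff,
      image_preimage_eq_of_subset hKsub]
    exact hKcpt
  apply HasCompactSupport.intro hpre
  intro x hx
  simpa [mem_preimage, mem_support, not_not] using hx

theorem fromLC_apply (g : LocallyConstant (OnePoint X) ℤ) (hg : g ∞ = 0) (x : X) :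
    fromLC X g hg x = g (x : OnePoint X) := rfl

noncomputable def ccEquiv : C_c(X, ℤ) ≃ₗ[ℤ]
    LinearMap.ker (LocallyConstant.evalₗ ℤ (∞ : OnePoint X) : LocallyConstant (OnePoint X) ℤ →ₗ[ℤ] ℤ) where
  toFun f := ⟨toLC X f, rfl⟩
  map_add' f g := by
    apply Subtype.ext
    apply LocallyConstant.ext
    intro z
    cases z with
    | infty => show (0:ℤ) = 0 + 0; simp
    | coe x => show (f + g) x = f x + g x; simp
  map_smul' c f := by
    apply Subtype.ext
    apply LocallyConstant.ext
    intro z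
    cases z with
    | infty => show (0:ℤ) = c • 0; simp
    | coe x => show (c • f) x = c • f x; simp
  invFun g := fromLC X g.1 g.2
  left_inv f := by ext x; rfl
  right_inv g := by
    apply Subtype.ext
    apply LocallyConstant.ext
    intro z
    cases z with
    | infty => exact (g.2).symm
    | coe x => rfl

theorem ccFree : Module.Free ℤ C_c(X, ℤ) := by
  haveI : TotallySeparatedSpace (OnePoint X) := totSep X
  haveI : TotallyDisconnectedSpace (OnePoint X) :=
    TotallySeparatedSpace.totallyDisconnectedSpace _
  haveI := kerEvalFree (OnePoint X) ∞
  exact Module.Free.of_equiv (ccEquiv X).symm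

theorem range_finite (f : C_c(X, ℤ)) : (range ⇑f).Finite := by
  have h1 : IsCompact (⇑f '' tsupport f) := f.hasCompactSupport.image f.continuous
  have h2 : (⇑f '' tsupport f).Finite := h1.finite ⟨inferInstance⟩
  refine (h2.insert 0).subset ?_
  rintro v ⟨x, rfl⟩
  by_cases hx : f x = 0
  · exact Or.inl hx
  · exact Or.inr ⟨x, subset_closure hx, rfl⟩

theorem gen_aux (n : ℕ) : ∀ (f : C_c(X, ℤ)) (hf : (range ⇑f).Finite),
    (hf.toFinset \ {0}).card ≤ n →
    f ∈ AddSubgroup.closure {f : C_c(X, ℤ) | ∃ U : Set X, IsCompact U ∧ IsOpen U ∧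
      ∀ x : X, (f : X → ℤ) x = U.indicator 1 x} := by
  induction n with
  | zero =>
    intro f hf hcard
    have : f = 0 := by
      ext x
      by_contra hx
      have : f x ∈ hf.toFinset \ {0} := by
        simp only [Finset.mem_sdiff, Set.Finite.mem_toFinset, Finset.mem_singleton]
        exact ⟨⟨x, rfl⟩, hx⟩
      rw [Finset.card_eq_zero.mp (Nat.le_zero.mp hcard)] at this
      exact absurd this (Finset.notMem_empty _)
    rw [this]; exact zero_mem _
  | succ n ih =>
    intro f hf hcard
    by_cases h0 : ∀ x, f x = 0
    · have : f = 0 := by ext x; exact h0 x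
      rw [this]; exact zero_mem _
    push_neg at h0
    obtain ⟨x₀, hx₀⟩ := h0
    set c : ℤ := f x₀ with hc
    set U : Set X := ⇑f ⁻¹' {c} with hU
    have hUopen : IsOpen U := (isOpen_discrete {c}).preimage f.continuous
    have hUclosed : IsClosed U := (isClosed_discrete {c}).preimage f.continuous
    have hUcpt : IsCompact U := by
      apply f.hasCompactSupport.of_isClosed_subset hUclosed
      intro x hx
      have : f x = c := hx
      exact subset_closure (by rw [mem_support, this]; exact hx₀)
    classical
    have hlc : IsLocallyConstant (U.indicator (1 : X → ℤ)) := by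
      intro s
      have : U.indicator (1 : X → ℤ) ⁻¹' s =
          (if (1:ℤ) ∈ s then U else ∅) ∪ (if (0:ℤ) ∈ s then Uᶜ else ∅) := by
        ext x
        by_cases hx : x ∈ U <;> split_ifs <;>
          simp_all [Set.indicator_of_mem, Set.indicator_of_notMem]
      rw [this]
      split_ifs <;>
        simp [hUopen, hUclosed.isOpen_compl, IsOpen.union, isOpen_empty]
    have hχcs : HasCompactSupport (U.indicator (1 : X → ℤ)) := by
      apply HasCompactSupport.intro hUcpt
      intro x hx
      exact Set.indicator_of_notMem hx 1
    set χ : C_c(X, ℤ) := ⟨⟨U.indicator 1, hlc.continuous⟩, hχcs⟩ with hχ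
    have hχS : χ ∈ {f : C_c(X, ℤ) | ∃ U : Set X, IsCompact U ∧ IsOpen U ∧
        ∀ x : X, (f : X → ℤ) x = U.indicator 1 x} := ⟨U, hUcpt, hUopen, fun x => rfl⟩
    set g : C_c(X, ℤ) := f - c • χ with hg
    have hgval : ∀ x, g x = if f x = c then 0 else f x := by
      intro x
      have : g x = f x - c • (U.indicator (1 : X → ℤ) x) := rfl
      rw [this]
      by_cases hx : f x = c
      · rw [Set.indicator_of_mem (by exact hx : x ∈ U)]
        simp [hx]
      · rw [Set.indicator_of_notMem (by exact hx : x ∉ U)]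
        simp [hx]
    have hgfin : (range ⇑g).Finite := range_finite X g
    have hsub : hgfin.toFinset \ {0} ⊆ (hf.toFinset \ {0}).erase c := by
      intro v hv
      simp only [Finset.mem_sdiff, Set.Finite.mem_toFinset, Finset.mem_singleton,
        Finset.mem_erase] at hv ⊢
      obtain ⟨⟨x, rfl⟩, hv0⟩ := hv
      rw [hgval x] at hv0 ⊢
      split_ifs at hv0 ⊢ with h
      · exact absurd rfl hv0
      · exact ⟨h, ⟨x, rfl⟩, hv0⟩
    have hcmem : c ∈ hf.toFinset \ {0} := by
      simp only [Finset.mem_sdiff, Set.Finite.mem_toFinset, Finset.mem_singleton]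
      exact ⟨⟨x₀, rfl⟩, hx₀⟩
    have hcard' : (hgfin.toFinset \ {0}).card ≤ n := by
      calc (hgfin.toFinset \ {0}).card ≤ ((hf.toFinset \ {0}).erase c).card :=
            Finset.card_le_card hsub
        _ = (hf.toFinset \ {0}).card - 1 := Finset.card_erase_of_mem hcmem
        _ ≤ n := by omega
    have hmemg := ih g hgfin hcard'
    have hmemχ : c • χ ∈ AddSubgroup.closure {f : C_c(X, ℤ) | ∃ U : Set X, IsCompact U ∧
        IsOpen U ∧ ∀ x : X, (f : X → ℤ) x = U.indicator 1 x} :=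
      AddSubgroup.zsmul_mem _ (AddSubgroup.subset_closure hχS) c
    have : f = g + c • χ := by rw [hg]; abel
    rw [this]
    exact add_mem hmemg hmemχ


/-- For a locally compact Hausdorff totally disconnected space `X`, the group
`C_c(X,ℤ)` of compactly supported continuous integer-valued functions is free abelian, and it
is generated by the characteristic functions of compact open subsets of `X`. -/
theorem stmt_7 (X : Type) [TopologicalSpace X] [LocallyCompactSpace X] [T2Space X]
    [TotallyDisconnectedSpace X] :
    Module.Free ℤ C_c(X, ℤ) ∧
    AddSubgroup.closure
        {f : C_c(X, ℤ) | ∃ U : Set X, IsCompact U ∧ IsOpen U ∧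
          ∀ x : X, (f : X → ℤ) x = U.indicator 1 x} = ⊤ := by
  refine ⟨ccFree X, ?_⟩
  rw [eq_top_iff]
  intro f _
  exact gen_aux X _ f (range_finite X f) le_rfl
end
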